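/- Let l_e ≥ w_e > 0 and l_o ≥ w_o > 0, let N_{c,e}, N_{c,o} ≥ 1 be integers, and let μ be a Borel probability measure on the configuration space ℝ² × ℝ. Let the ego footprint be Rect(l_e, w_e) (configuration (0,0,0)) with multi-circle cover BC_e = BC((0,0); l_e, w_e, N_{c,e}), and for each configuration y = (x, θ) ∈ ℝ² × ℝ let the object footprint be S(y; l_o, w_o) with multi-circle cover BC_o(y) = BC(y; l_o, w_o, N_{c,o}). Then μ{ y ∈ ℝ² × ℝ : Rect(l_e, w_e) ∩ S(y; l_o, w_o) ≠ ∅ } ≤ μ{ y ∈ ℝ² × ℝ : BC_e ∩ BC_o(y) ≠ ∅ }, both sets being Borel measurable. -/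

import Mathlib

open Real Set

/-- Euclidean norm on `ℝ × ℝ`. -/
noncomputable def enorm2 (p : ℝ × ℝ) : ℝ := Real.sqrt (p.1 ^ 2 + p.2 ^ 2)

/-- Closed Euclidean ball in `ℝ × ℝ` with center `c` and radius `r`. -/
noncomputable def cball (c : ℝ × ℝ) (r : ℝ) : Set (ℝ × ℝ) := {p | enorm2 (p - c) ≤ r}

/-- Unit heading vector `u(θ) = (cos θ, sin θ)`. -/
noncomputable def uvec (θ : ℝ) : ℝ × ℝ := (Real.cos θ, Real.sin θ)

/-- Rotation of a point of `ℝ × ℝ` by angle `θ` about the origin. -/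
noncomputable def rot2 (θ : ℝ) (p : ℝ × ℝ) : ℝ × ℝ :=
  (Real.cos θ * p.1 - Real.sin θ * p.2, Real.sin θ * p.1 + Real.cos θ * p.2)

/-- Closed axis-aligned rectangle `[−l/2, l/2] × [−w/2, w/2]`. -/
def Rect (l w : ℝ) : Set (ℝ × ℝ) := Set.Icc (-(l / 2)) (l / 2) ×ˢ Set.Icc (-(w / 2)) (w / 2)

/-- Oriented footprint: image of `Rect l w` under rotation by `θ` followed by translation by `x`. -/
noncomputable def footprint (x : ℝ × ℝ) (θ l w : ℝ) : Set (ℝ × ℝ) :=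
  (fun p => x + rot2 θ p) '' Rect l w

/-- Common radius of the multi-circle cover. -/
noncomputable def circRadius (l w : ℝ) (Nc : ℕ) : ℝ :=
  Real.sqrt ((l / (2 * Nc)) ^ 2 + w ^ 2 / 4)

/-- Spacing of the circle centers of the multi-circle cover. -/
noncomputable def circSpacing (l w : ℝ) (Nc : ℕ) : ℝ :=
  2 * Real.sqrt (circRadius l w Nc ^ 2 - w ^ 2 / 4)

/-- Multi-circle cover of the footprint with configuration `(x, θ)`:
`N_c` closed balls of radius `circRadius` centered at `x + L_i • u(θ)` with
`L_i = (2i − N_c − 1) d_c / 2`, `i = 1, …, N_c`. -/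
noncomputable def multiCircle (x : ℝ × ℝ) (θ l w : ℝ) (Nc : ℕ) : Set (ℝ × ℝ) :=
  ⋃ i ∈ Finset.Icc 1 Nc,
    cball (x + ((2 * (i : ℝ) - Nc - 1) * circSpacing l w Nc / 2) • uvec θ)
      (circRadius l w Nc)

lemma continuous_enorm2 : Continuous enorm2 :=
  Real.continuous_sqrt.comp (by fun_prop)

lemma enorm2_rot2 (θ : ℝ) (q : ℝ × ℝ) : enorm2 (rot2 θ q) = enorm2 q := by
  simp only [enorm2, rot2]
  congr 1
  linear_combination (q.1 ^ 2 + q.2 ^ 2) * Real.sin_sq_add_cos_sq θ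

lemma smul_uvec (c θ : ℝ) : c • uvec θ = rot2 θ (c, 0) := by
  simp [uvec, rot2, Prod.smul_mk, smul_eq_mul, Prod.ext_iff]
  constructor <;> ring

lemma rot2_sub (θ : ℝ) (a b : ℝ × ℝ) : rot2 θ (a - b) = rot2 θ a - rot2 θ b := by
  simp [rot2, Prod.ext_iff]
  constructor <;> ring

lemma circSpacing_eq (l w : ℝ) (hl : 0 ≤ l) (Nc : ℕ) :
    circSpacing l w Nc = 2 * (l / (2 * Nc)) := by
  have h : circRadius l w Nc ^ 2 = (l / (2 * Nc)) ^ 2 + w ^ 2 / 4 :=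
    Real.sq_sqrt (by positivity)
  rw [circSpacing, h]
  have : (l / (2 * Nc)) ^ 2 + w ^ 2 / 4 - w ^ 2 / 4 = (l / (2 * Nc)) ^ 2 := by ring
  rw [this, Real.sqrt_sq (by positivity)]

lemma rect_cover (l w : ℝ) (hw : 0 < w) (hwl : w ≤ l) (Nc : ℕ) (hNc : 1 ≤ Nc)
    {p : ℝ × ℝ} (hp : p ∈ Rect l w) :
    ∃ i ∈ Finset.Icc 1 Nc,
      enorm2 (p - ((2 * (i : ℝ) - Nc - 1) * circSpacing l w Nc / 2, 0)) ≤
        circRadius l w Nc := by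
  have hl : 0 < l := lt_of_lt_of_le hw hwl
  have hNc' : (0 : ℝ) < Nc := by exact_mod_cast hNc
  set s : ℝ := l / (2 * Nc) with hs
  have hs0 : 0 < s := by positivity
  rw [Rect, Set.mem_prod, Set.mem_Icc, Set.mem_Icc] at hp
  obtain ⟨⟨h1, h2⟩, h3, h4⟩ := hp
  have hsN : s * Nc = l / 2 := by rw [hs, div_mul_eq_mul_div, div_eq_div_iff (by positivity) (by norm_num)]; ring
  set t : ℝ := (p.1 + l / 2) / (2 * s) with htdef
  have ht0 : 0 ≤ t := by apply div_nonneg <;> linarith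
  have h2st : 2 * s * t = p.1 + l / 2 := by rw [htdef]; field_simp
  have htN : t ≤ Nc := by
    rw [htdef, div_le_iff₀ (by linarith)]
    nlinarith
  refine ⟨max 1 ⌈t⌉₊, ?_, ?_⟩
  · rw [Finset.mem_Icc]
    exact ⟨le_max_left _ _, max_le hNc (Nat.ceil_le.mpr htN)⟩
  · set i : ℕ := max 1 ⌈t⌉₊ with hidef
    have hti : t ≤ (i : ℝ) := le_trans (Nat.le_ceil t) (by exact_mod_cast le_max_right 1 ⌈t⌉₊)
    have hit : (i : ℝ) ≤ t + 1 := by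
      have hc : (⌈t⌉₊ : ℝ) < t + 1 := Nat.ceil_lt_add_one ht0
      have : (i : ℝ) = max 1 (⌈t⌉₊ : ℝ) := by rw [hidef]; exact_mod_cast Nat.cast_max ..
      rw [this]
      exact max_le (by linarith) hc.le
    rw [circSpacing_eq l w hl.le Nc]
    have hc : p.1 - (2 * (i : ℝ) - Nc - 1) * (2 * s) / 2 = s * (2 * t - 2 * i + 1) := by
      have : p.1 = 2 * s * t - s * Nc := by rw [hsN]; linarith
      rw [this]; ring
    have hb : (p.1 - (2 * (i : ℝ) - Nc - 1) * (2 * s) / 2) ^ 2 ≤ s ^ 2 := by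
      rw [hc]
      have hh : 0 ≤ ((i : ℝ) - t) * (t - i + 1) * s ^ 2 :=
        mul_nonneg (mul_nonneg (by linarith) (by linarith)) (sq_nonneg s)
      nlinarith [hh]
    have hb2 : p.2 ^ 2 ≤ w ^ 2 / 4 := by nlinarith
    have : enorm2 (p - ((2 * (i : ℝ) - Nc - 1) * (2 * s) / 2, 0)) =
        Real.sqrt ((p.1 - (2 * (i : ℝ) - Nc - 1) * (2 * s) / 2) ^ 2 + p.2 ^ 2) := by
      simp [enorm2, Prod.sub_def]
    rw [this, circRadius]
    exact Real.sqrt_le_sqrt (by rw [← hs]; linarith)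

lemma footprint_subset_multiCircle (x : ℝ × ℝ) (θ l w : ℝ) (hw : 0 < w) (hwl : w ≤ l)
    (Nc : ℕ) (hNc : 1 ≤ Nc) : footprint x θ l w ⊆ multiCircle x θ l w Nc := by
  rintro q ⟨p, hp, rfl⟩
  obtain ⟨i, hi, hle⟩ := rect_cover l w hw hwl Nc hNc hp
  refine Set.mem_biUnion hi ?_
  show enorm2 _ ≤ _
  have : x + rot2 θ p - (x + ((2 * (i : ℝ) - Nc - 1) * circSpacing l w Nc / 2) • uvec θ)
      = rot2 θ (p - ((2 * (i : ℝ) - Nc - 1) * circSpacing l w Nc / 2, 0)) := by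
    rw [smul_uvec, rot2_sub]; abel
  rw [this, enorm2_rot2]
  exact hle

lemma rect_eq_footprint (l w : ℝ) : Rect l w = footprint (0, 0) 0 l w := by
  have : (fun p : ℝ × ℝ => ((0 : ℝ), (0 : ℝ)) + rot2 0 p) = id := by
    funext p; simp [rot2, Prod.ext_iff]
  rw [footprint, this, Set.image_id]

lemma isClosed_proj {A : Set (ℝ × ℝ)} (hA : IsCompact A)
    {P : ((ℝ × ℝ) × ℝ) → (ℝ × ℝ) → Prop}
    (hP : IsClosed {z : ((ℝ × ℝ) × ℝ) × (ℝ × ℝ) | P z.1 z.2}) :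
    IsClosed {y : (ℝ × ℝ) × ℝ | ∃ p ∈ A, P y p} := by
  haveI : CompactSpace A := isCompact_iff_compactSpace.mp hA
  have hC : IsClosed {z : ((ℝ × ℝ) × ℝ) × A | P z.1 ↑z.2} :=
    hP.preimage (continuous_fst.prodMk (continuous_subtype_val.comp continuous_snd))
  have heq : {y : (ℝ × ℝ) × ℝ | ∃ p ∈ A, P y p} =
      Prod.fst '' {z : ((ℝ × ℝ) × ℝ) × A | P z.1 ↑z.2} := by
    ext y
    constructor
    · rintro ⟨p, hpA, hp⟩; exact ⟨(y, ⟨p, hpA⟩), hp, rfl⟩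
    · rintro ⟨⟨y', p⟩, hp, rfl⟩; exact ⟨↑p, p.2, hp⟩
  rw [heq]
  exact isClosedMap_fst_of_compactSpace _ hC

lemma isCompact_cball (c : ℝ × ℝ) (r : ℝ) : IsCompact (cball c r) := by
  have hcl : IsClosed (cball c r) := by
    have h : cball c r = (fun p => enorm2 (p - c)) ⁻¹' Set.Iic r := rfl
    rw [h]
    exact isClosed_Iic.preimage (continuous_enorm2.comp (continuous_id.sub continuous_const))
  have hbd : Bornology.IsBounded (cball c r) := by
    apply (Metric.isBounded_closedBall (x := c) (r := max r 0)).subset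
    intro p hp
    have h1 : enorm2 (p - c) ≤ r := hp
    have h2 : |(p - c).1| ≤ enorm2 (p - c) := by
      rw [enorm2, ← Real.sqrt_sq_eq_abs]
      exact Real.sqrt_le_sqrt (by nlinarith [sq_nonneg (p - c).2])
    have h3 : |(p - c).2| ≤ enorm2 (p - c) := by
      rw [enorm2, ← Real.sqrt_sq_eq_abs]
      exact Real.sqrt_le_sqrt (by nlinarith [sq_nonneg (p - c).1])
    rw [Metric.mem_closedBall, dist_eq_norm, Prod.norm_def]
    simp only [Real.norm_eq_abs]
    exact max_le ((h2.trans h1).trans (le_max_left r 0)) ((h3.trans h1).trans (le_max_left r 0))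
  exact Metric.isCompact_of_isClosed_isBounded hcl hbd

lemma isCompact_multiCircle (x : ℝ × ℝ) (θ l w : ℝ) (Nc : ℕ) :
    IsCompact (multiCircle x θ l w Nc) :=
  (Finset.Icc 1 Nc).isCompact_biUnion fun _ _ => isCompact_cball _ _

lemma isClosed_memMultiCircle (l w : ℝ) (Nc : ℕ) :
    IsClosed {z : ((ℝ × ℝ) × ℝ) × (ℝ × ℝ) | z.2 ∈ multiCircle z.1.1 z.1.2 l w Nc} := by
  have heq : {z : ((ℝ × ℝ) × ℝ) × (ℝ × ℝ) | z.2 ∈ multiCircle z.1.1 z.1.2 l w Nc} =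
      ⋃ i ∈ Finset.Icc 1 Nc, {z : ((ℝ × ℝ) × ℝ) × (ℝ × ℝ) |
        enorm2 (z.2 - (z.1.1 + ((2 * (i : ℝ) - Nc - 1) * circSpacing l w Nc / 2) • uvec z.1.2))
          ≤ circRadius l w Nc} := by
    ext z
    simp [multiCircle, cball, Set.mem_iUnion]
  rw [heq]
  apply isClosed_biUnion_finset
  intro i _
  have hcont : Continuous (fun z : ((ℝ × ℝ) × ℝ) × (ℝ × ℝ) =>
      enorm2 (z.2 - (z.1.1 + ((2 * (i : ℝ) - Nc - 1) * circSpacing l w Nc / 2) • uvec z.1.2))) := by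
    apply continuous_enorm2.comp
    unfold uvec
    fun_prop
  exact isClosed_Iic.preimage hcont

/-- The probability (under any Borel probability measure `μ` on the configuration space
`ℝ² × ℝ`) that the object's rectangular footprint collides with the ego's rectangle is at
most the probability that the two multi-circle covers collide; both collision sets are
Borel measurable. -/
theorem poc_over_approximation
    (le we lo wo : ℝ) (hwe : 0 < we) (hle : we ≤ le) (hwo : 0 < wo) (hlo : wo ≤ lo)
    (Nce Nco : ℕ) (hNce : 1 ≤ Nce) (hNco : 1 ≤ Nco)
    (μ : MeasureTheory.Measure ((ℝ × ℝ) × ℝ)) [MeasureTheory.IsProbabilityMeasure μ] :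
    MeasurableSet {y : (ℝ × ℝ) × ℝ | (Rect le we ∩ footprint y.1 y.2 lo wo).Nonempty} ∧
    MeasurableSet {y : (ℝ × ℝ) × ℝ |
      (multiCircle (0, 0) 0 le we Nce ∩ multiCircle y.1 y.2 lo wo Nco).Nonempty} ∧
    μ {y : (ℝ × ℝ) × ℝ | (Rect le we ∩ footprint y.1 y.2 lo wo).Nonempty} ≤
      μ {y : (ℝ × ℝ) × ℝ |
        (multiCircle (0, 0) 0 le we Nce ∩ multiCircle y.1 y.2 lo wo Nco).Nonempty} := by
  have hArect : IsCompact (Rect lo wo) := by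
    rw [Rect]; exact isCompact_Icc.prod isCompact_Icc
  have hset1 : {y : (ℝ × ℝ) × ℝ | (Rect le we ∩ footprint y.1 y.2 lo wo).Nonempty} =
      {y : (ℝ × ℝ) × ℝ | ∃ p ∈ Rect lo wo, y.1 + rot2 y.2 p ∈ Rect le we} := by
    ext y
    simp only [Set.mem_setOf_eq, footprint, Set.Nonempty, Set.mem_inter_iff, Set.mem_image]
    constructor
    · rintro ⟨q, hq1, p, hp, rfl⟩; exact ⟨p, hp, hq1⟩
    · rintro ⟨p, hp, h⟩; exact ⟨y.1 + rot2 y.2 p, h, p, hp, rfl⟩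
  have hm1 : IsClosed {y : (ℝ × ℝ) × ℝ | (Rect le we ∩ footprint y.1 y.2 lo wo).Nonempty} := by
    rw [hset1]
    apply isClosed_proj hArect
    have hclr : IsClosed (Rect le we) := by
      rw [Rect]; exact isClosed_Icc.prod isClosed_Icc
    have hcont : Continuous (fun z : ((ℝ × ℝ) × ℝ) × (ℝ × ℝ) => z.1.1 + rot2 z.1.2 z.2) := by
      unfold rot2; fun_prop
    exact hclr.preimage hcont
  have hset2 : {y : (ℝ × ℝ) × ℝ |
      (multiCircle (0, 0) 0 le we Nce ∩ multiCircle y.1 y.2 lo wo Nco).Nonempty} =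
      {y : (ℝ × ℝ) × ℝ | ∃ p ∈ multiCircle (0, 0) 0 le we Nce,
        p ∈ multiCircle y.1 y.2 lo wo Nco} := by
    ext y
    simp only [Set.mem_setOf_eq, Set.inter_nonempty]
  have hm2 : IsClosed {y : (ℝ × ℝ) × ℝ |
      (multiCircle (0, 0) 0 le we Nce ∩ multiCircle y.1 y.2 lo wo Nco).Nonempty} := by
    rw [hset2]
    exact isClosed_proj (isCompact_multiCircle (0, 0) 0 le we Nce)
      (isClosed_memMultiCircle lo wo Nco)
  refine ⟨hm1.measurableSet, hm2.measurableSet, ?_⟩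
  apply MeasureTheory.measure_mono
  rintro y ⟨q, hq1, hq2⟩
  refine ⟨q, ?_, footprint_subset_multiCircle y.1 y.2 lo wo hwo hlo Nco hNco hq2⟩
  have := footprint_subset_multiCircle (0, 0) 0 le we hwe hle Nce hNce
  rw [← rect_eq_footprint] at this
  exact this hq1
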